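/- With h as above, at any fixed point m̄ of h (i.e., h(m̄) = m̄ with m̄ > 1 and d(m̄) > 0 carrying positive F-mass), the derivative satisfies h'(m̄) < 1. Consequently H(m) = h(m) − m can only cross zero from above, and h has a unique fixed point M* in 𝓜. -/

import Mathlib

open Set Real MeasureTheory

open Filter Topology in
lemma slope_right_lt {f : ℝ → ℝ} {c l b : ℝ} (hf : HasDerivAt f l c) (hl : l < 0)
    (hcb : c < b) : ∃ x, c < x ∧ x < b ∧ f x < f c := by
  have hs := hasDerivAt_iff_tendsto_slope.mp hf
  have h1 : ∀ᶠ x in 𝓝[>] c, slope f c x < 0 :=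
    (hs.mono_left (nhdsWithin_mono c (fun x hx => hx.ne'))).eventually_lt_const hl
  have h2 : ∀ᶠ x in 𝓝[>] c, x ∈ Ioo c b :=
    eventually_of_mem (Ioo_mem_nhdsGT hcb) (fun x hx => hx)
  rcases (h1.and h2).exists with ⟨x, hsl, hx⟩
  refine ⟨x, hx.1, hx.2, ?_⟩
  rw [slope_def_field] at hsl
  rcases div_neg_iff.mp hsl with ⟨h, h'⟩ | ⟨h, h'⟩
  · linarith [hx.1]
  · linarith

open Filter Topology in
lemma slope_left_gt {f : ℝ → ℝ} {c l a : ℝ} (hf : HasDerivAt f l c) (hl : l < 0)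
    (hac : a < c) : ∃ x, a < x ∧ x < c ∧ f c < f x := by
  have hs := hasDerivAt_iff_tendsto_slope.mp hf
  have h1 : ∀ᶠ x in 𝓝[<] c, slope f c x < 0 :=
    (hs.mono_left (nhdsWithin_mono c (fun x hx => hx.ne))).eventually_lt_const hl
  have h2 : ∀ᶠ x in 𝓝[<] c, x ∈ Ioo a c :=
    eventually_of_mem (Ioo_mem_nhdsLT hac) (fun x hx => hx)
  rcases (h1.and h2).exists with ⟨x, hsl, hx⟩
  refine ⟨x, hx.1, hx.2, ?_⟩
  rw [slope_def_field] at hsl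
  rcases div_neg_iff.mp hsl with ⟨h, h'⟩ | ⟨h, h'⟩
  · linarith
  · linarith [hx.2]

/-- At any fixed point `m̄` of `h` (with `m̄ > 1` and positive `F`-mass on
`[0, d(m̄)]`), the derivative satisfies `h'(m̄) < 1`; consequently `H = h − id`
can only cross zero from above, and `h` has a unique fixed point in `𝓜`. -/
theorem h_fixed_point_unique (γ : ℝ) (hγ : 0 < γ)
    (μ : Measure ℝ) [IsProbabilityMeasure μ]
    (hsupp : μ (Iio (0:ℝ)) = 0)
    (hexp : Integrable (fun x => Real.exp (γ * x)) μ)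
    (g : ℝ → ℝ) (hg2 : ContDiff ℝ 2 g)
    (hconv : ConvexOn ℝ univ g)
    (hg' : ∀ y, 1 ≤ deriv g y) (hg'' : ∀ y, 0 ≤ deriv (deriv g) y)
    (d : ℝ → ℝ) (hd : ∀ m, d m = Real.log (m * deriv g 0) / γ)
    (Im : ℝ → ℝ → ℝ)
    (hIin : ∀ m x, d m < x → Im m x ∈ Ioo 0 x)
    (hIeq : ∀ m x, d m < x → Real.exp (γ * (x - Im m x)) = m * deriv g (Im m x))
    (h : ℝ → ℝ)
    (hh : ∀ m, h m = (∫ x in Icc 0 (d m), Real.exp (γ * x) ∂μ) +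
      ∫ x in Ioi (d m), Real.exp (γ * (x - Im m x)) ∂μ)
    (D : ℝ → ℝ)
    (hD : ∀ m, D m = ∫ x in Ioi (d m),
      γ * (deriv g (Im m x))^2 /
        (γ * deriv g (Im m x) + deriv (deriv g) (Im m x)) ∂μ)
    (hderiv : ∀ m ∈ Icc (1:ℝ) (∫ x, Real.exp (γ * x) ∂μ), HasDerivAt h (D m) m)
    (hcont : ContinuousOn h (Icc 1 (∫ x, Real.exp (γ * x) ∂μ)))
    (hmass : ∀ m ∈ Icc (1:ℝ) (∫ x, Real.exp (γ * x) ∂μ), 0 < μ (Icc 0 (d m)))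
    (hH1 : 1 < h 1)
    (hHB : h (∫ x, Real.exp (γ * x) ∂μ) < ∫ x, Real.exp (γ * x) ∂μ) :
    (∀ m' ∈ Ioo (1:ℝ) (∫ x, Real.exp (γ * x) ∂μ), h m' = m' → D m' < 1) ∧
    ∃! Mstar, Mstar ∈ Icc (1:ℝ) (∫ x, Real.exp (γ * x) ∂μ) ∧ h Mstar = Mstar := by
  set Btot := ∫ x, Real.exp (γ * x) ∂μ with hBtot
  -- derivative of g is monotone
  have hgC1 : ContDiff ℝ 1 (deriv g) := by
    have h2 : ContDiff ℝ ((1:ℕ) + 1) g := by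
      convert hg2 using 2
      norm_num
    exact (contDiff_succ_iff_deriv.mp h2).2.2
  have hgdiff : Differentiable ℝ (deriv g) := hgC1.differentiable one_ne_zero
  have hmonoG : Monotone (deriv g) := monotone_of_deriv_nonneg hgdiff hg''
  -- PART 1
  have key : ∀ m' ∈ Ioo (1:ℝ) Btot, h m' = m' → D m' < 1 := by
    intro m' hm' hfix
    have hm1 : (1:ℝ) < m' := hm'.1
    have hm0 : (0:ℝ) < m' := by linarith
    set dm := d m' with hdm
    -- Im monotone on Ioi dm
    have hmono : ∀ x y, dm < x → dm < y → x < y → Im m' x ≤ Im m' y := by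
      intro x y hx hy hxy
      by_contra hlt
      push_neg at hlt
      have hG : deriv g (Im m' y) ≤ deriv g (Im m' x) := hmonoG hlt.le
      have e1 := hIeq m' x hx
      have e2 := hIeq m' y hy
      have : Real.exp (γ * (y - Im m' y)) ≤ Real.exp (γ * (x - Im m' x)) := by
        rw [e1, e2]
        exact mul_le_mul_of_nonneg_left hG hm0.le
      have h3 : γ * (y - Im m' y) ≤ γ * (x - Im m' x) := Real.exp_le_exp.mp this
      have h4 : y - Im m' y ≤ x - Im m' x := le_of_mul_le_mul_left h3 hγ
      linarith
    -- a monotone measurable extension of Im m'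
    set J : ℝ → ℝ := fun x => if dm < x then Im m' x else 0 with hJdef
    have hJnonneg : ∀ x, 0 ≤ J x := by
      intro x
      simp only [hJdef]
      split
      · exact (hIin m' x (by assumption)).1.le
      · exact le_refl 0
    have hJmono : Monotone J := by
      intro x y hxy
      simp only [hJdef]
      by_cases hx : dm < x
      · have hy : dm < y := lt_of_lt_of_le hx hxy
        rw [if_pos hx, if_pos hy]
        rcases eq_or_lt_of_le hxy with rfl | hlt
        · exact le_refl _
        · exact hmono x y hx hy hlt
      · rw [if_neg hx]
        split
        · exact (hIin m' y (by assumption)).1.le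
        · exact le_refl 0
    have hJmeas : Measurable J := hJmono.measurable
    set f2 : ℝ → ℝ := fun x => Real.exp (γ * (x - Im m' x)) with hf2def
    have hGmeas : Measurable (fun x => Real.exp (γ * (x - J x))) :=
      (Real.measurable_exp.comp ((measurable_id.sub hJmeas).const_mul γ))
    have haeEq : f2 =ᵐ[μ.restrict (Ioi dm)] (fun x => Real.exp (γ * (x - J x))) := by
      refine (ae_restrict_iff' measurableSet_Ioi).mpr (Filter.Eventually.of_forall ?_)
      intro x hx
      simp only [hf2def, hJdef, if_pos (mem_Ioi.mp hx)]
    have hGint : IntegrableOn (fun x => Real.exp (γ * (x - J x))) (Ioi dm) μ := by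
      refine Integrable.mono' (hexp.restrict (s := Ioi dm)) hGmeas.aestronglyMeasurable
        (Filter.Eventually.of_forall ?_)
      intro x
      rw [Real.norm_eq_abs, abs_of_pos (Real.exp_pos _)]
      exact Real.exp_le_exp.mpr (mul_le_mul_of_nonneg_left (by linarith [hJnonneg x]) hγ.le)
    have hf2int : IntegrableOn f2 (Ioi dm) μ := hGint.congr haeEq.symm
    set A := ∫ x in Icc 0 dm, Real.exp (γ * x) ∂μ with hA
    set B := ∫ x in Ioi dm, f2 x ∂μ with hB
    have hAB : A + B = m' := by
      have := hh m'
      rw [hfix] at this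
      exact this.symm
    -- A is positive
    have hApos : 0 < A := by
      have h1le : ∫ x in Icc 0 dm, (1:ℝ) ∂μ ≤ A := by
        refine integral_mono_of_nonneg (Filter.Eventually.of_forall fun _ => zero_le_one)
          (hexp.restrict (s := Icc 0 dm)) ?_
        refine (ae_restrict_iff' measurableSet_Icc).mpr (Filter.Eventually.of_forall ?_)
        intro x hx
        exact Real.one_le_exp (mul_nonneg hγ.le hx.1)
      have hconst : ∫ x in Icc 0 dm, (1:ℝ) ∂μ = (μ (Icc 0 dm)).toReal := by
        simp [setIntegral_const, Measure.real]
      have hpos : 0 < (μ (Icc 0 dm)).toReal :=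
        ENNReal.toReal_pos (hmass m' ⟨hm1.le, hm'.2.le⟩).ne' (measure_ne_top μ _)
      rw [hconst] at h1le
      linarith
    have hBlt : B < m' := by linarith
    -- bound D m'
    have hgIm_eq : (fun x => deriv g (Im m' x)) =ᵐ[μ.restrict (Ioi dm)] (fun x => f2 x / m') := by
      refine (ae_restrict_iff' measurableSet_Ioi).mpr (Filter.Eventually.of_forall ?_)
      intro x hx
      have := hIeq m' x (mem_Ioi.mp hx)
      simp only [hf2def]
      rw [this]
      field_simp
    have hgIm_int : IntegrableOn (fun x => deriv g (Im m' x)) (Ioi dm) μ :=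
      (hf2int.div_const m').congr hgIm_eq.symm
    have hDle : D m' ≤ ∫ x in Ioi dm, deriv g (Im m' x) ∂μ := by
      rw [hD]
      refine integral_mono_of_nonneg (Filter.Eventually.of_forall ?_) hgIm_int
        (Filter.Eventually.of_forall ?_)
      · intro x
        have ha := hg' (Im m' x)
        have hb := hg'' (Im m' x)
        positivity
      · intro x
        have ha := hg' (Im m' x)
        have hb := hg'' (Im m' x)
        have hden : 0 < γ * deriv g (Im m' x) + deriv (deriv g) (Im m' x) := by nlinarith
        rw [div_le_iff₀ hden]
        nlinarith
    have hInt_eq : ∫ x in Ioi dm, deriv g (Im m' x) ∂μ = B / m' := by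
      rw [show B / m' = ∫ x in Ioi dm, f2 x / m' ∂μ by rw [integral_div]]
      exact integral_congr_ae hgIm_eq
    have : D m' ≤ B / m' := hInt_eq ▸ hDle
    have : B / m' < 1 := (div_lt_one hm0).mpr hBlt
    linarith
  -- 1 < Btot
  have h1B : (1:ℝ) < Btot := by
    have hge : (1:ℝ) ≤ Btot := by
      have : ∫ _x, (1:ℝ) ∂μ ≤ Btot := by
        refine integral_mono_of_nonneg (Filter.Eventually.of_forall fun _ => zero_le_one)
          hexp ?_
        have hae : ∀ᵐ x ∂μ, 0 ≤ x := by
          rw [ae_iff]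
          convert hsupp using 2
          ext x
          simp [Iio]
        filter_upwards [hae] with x hx
        exact Real.one_le_exp (mul_nonneg hγ.le hx)
      simpa using this
    rcases eq_or_lt_of_le hge with heq | hlt
    · exfalso
      rw [← heq] at hHB
      linarith
    · exact hlt
  -- the function H
  set H : ℝ → ℝ := fun m => h m - m with hHdef
  have hHcont : ContinuousOn H (Icc 1 Btot) := hcont.sub continuousOn_id
  have hHd : ∀ c ∈ Icc (1:ℝ) Btot, HasDerivAt H (D c - 1) c := fun c hc =>
    (hderiv c hc).sub (hasDerivAt_id c)
  -- every fixed point in Icc is interior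
  have hint : ∀ c ∈ Icc (1:ℝ) Btot, h c = c → c ∈ Ioo (1:ℝ) Btot := by
    intro c hc hfc
    rcases eq_or_lt_of_le hc.1 with rfl | h1c
    · exfalso; rw [hfc] at hH1; exact lt_irrefl _ hH1
    rcases eq_or_lt_of_le hc.2 with rfl | hcB
    · exfalso; rw [hfc] at hHB; exact lt_irrefl _ hHB
    exact ⟨h1c, hcB⟩
  -- uniqueness core
  have uniq : ∀ c₁ c₂, c₁ ∈ Icc (1:ℝ) Btot → c₂ ∈ Icc (1:ℝ) Btot →
      h c₁ = c₁ → h c₂ = c₂ → c₁ < c₂ → False := by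
    intro c₁ c₂ hc₁ hc₂ hf₁ hf₂ hlt
    have hio₁ := hint c₁ hc₁ hf₁
    have hio₂ := hint c₂ hc₂ hf₂
    have hD₁ : D c₁ < 1 := key c₁ hio₁ hf₁
    have hD₂ : D c₂ < 1 := key c₂ hio₂ hf₂
    have hH₁ : H c₁ = 0 := by simp [hHdef, hf₁]
    have hH₂ : H c₂ = 0 := by simp [hHdef, hf₂]
    obtain ⟨a, hca, hab₂, hHa⟩ := slope_right_lt (hHd c₁ hc₁) (by linarith) hlt
    rw [hH₁] at hHa
    obtain ⟨b, hab, hbc₂, hHb⟩ := slope_left_gt (hHd c₂ hc₂) (by linarith) hab₂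
    rw [hH₂] at hHb
    have haIcc : Icc a b ⊆ Icc (1:ℝ) Btot := by
      apply Icc_subset_Icc <;> [linarith [hio₁.1]; linarith [hio₂.2]]
    have hcontab : ContinuousOn H (Icc a b) := hHcont.mono haIcc
    set S : Set ℝ := Icc a b ∩ {x | H x ≤ 0} with hSdef
    have hSclosed : IsClosed S := by
      have : S = Icc a b ∩ H ⁻¹' Iic 0 := rfl
      rw [this]
      exact hcontab.preimage_isClosed_of_isClosed isClosed_Icc isClosed_Iic
    have haS : a ∈ S := ⟨⟨le_refl a, hab.le⟩, hHa.le⟩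
    have hSbdd : BddAbove S := BddAbove.mono inter_subset_left bddAbove_Icc
    set c := sSup S with hcdef
    have hcS : c ∈ S := hSclosed.csSup_mem ⟨a, haS⟩ hSbdd
    have hac : a ≤ c := le_csSup hSbdd haS
    have hcb : c ≤ b := hcS.1.2
    have hcltb : c < b := lt_of_le_of_ne hcb (by
      intro hcbe
      have := hcS.2
      rw [hcbe] at this
      exact absurd hHb (not_lt.mpr this))
    have hpos : ∀ x, c < x → x ≤ b → 0 < H x := by
      intro x hcx hxb
      by_contra hnp
      push_neg at hnp
      have hxS : x ∈ S := ⟨⟨hac.trans hcx.le, hxb⟩, hnp⟩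
      exact absurd (le_csSup hSbdd hxS) (not_le.mpr hcx)
    have hcle : H c ≤ 0 := hcS.2
    have hHc0 : H c = 0 := by
      rcases eq_or_lt_of_le hcle with heq | hneg
      · exact heq
      · exfalso
        have hsub : Icc c b ⊆ Icc a b := Icc_subset_Icc hac (le_refl b)
        have hIV := intermediate_value_Ioo hcb (hcontab.mono hsub)
        have h0mem : (0:ℝ) ∈ Ioo (H c) (H b) := ⟨hneg, hHb⟩
        obtain ⟨z, hz, hHz⟩ := hIV h0mem
        have := hpos z hz.1 hz.2.le
        rw [hHz] at this
        exact lt_irrefl _ this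
    -- c is a fixed point in the interior
    have hcfix : h c = c := by
      have := hHc0
      simp only [hHdef] at this
      linarith
    have hcIcc : c ∈ Icc (1:ℝ) Btot := haIcc ⟨hac, hcb⟩
    have hcIoo : c ∈ Ioo (1:ℝ) Btot := hint c hcIcc hcfix
    have hDc : D c < 1 := key c hcIoo hcfix
    obtain ⟨x, hcx, hxb, hHx⟩ := slope_right_lt (hHd c hcIcc) (by linarith) hcltb
    rw [hHc0] at hHx
    exact absurd (hpos x hcx hxb.le) (not_lt.mpr hHx.le)
  -- existence via IVT
  have hex : ∃ c ∈ Icc (1:ℝ) Btot, h c = c := by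
    have hIV := intermediate_value_Icc' h1B.le hHcont
    have h0mem : (0:ℝ) ∈ Icc (H Btot) (H 1) := by
      constructor
      · simp only [hHdef]; linarith
      · simp only [hHdef]; linarith
    obtain ⟨c, hc, hHc⟩ := hIV h0mem
    refine ⟨c, hc, ?_⟩
    simp only [hHdef] at hHc
    linarith
  obtain ⟨c, hcIcc, hcfix⟩ := hex
  refine ⟨key, c, ⟨hcIcc, hcfix⟩, ?_⟩
  rintro y ⟨hyIcc, hyfix⟩
  rcases lt_trichotomy y c with hylt | rfl | hygt
  · exact absurd (uniq y c hyIcc hcIcc hyfix hcfix hylt) (fun f => f)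
  · rfl
  · exact absurd (uniq c y hcIcc hyIcc hcfix hyfix hygt) (fun f => f)
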